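/- If a digraph G has a kernel, then the models Mod(G) (maximal E⁻¹-closed semikernels) are exactly the kernels of G. -/
import Mathlib


/-- Out-neighbours of a set `X` under edge relation `E`. -/
def outS {V : Type*} (E : V → V → Prop) (X : Set V) : Set V := {y | ∃ x ∈ X, E x y}

/-- In-neighbours of a set `X` under edge relation `E`. -/
def inS {V : Type*} (E : V → V → Prop) (X : Set V) : Set V := {y | ∃ x ∈ X, E y x}

/-- `K` is a kernel of the digraph `(G,E)`. -/
def IsKernel {V : Type*} (G : Set V) (E : V → V → Prop) (K : Set V) : Prop :=
  K ⊆ G ∧ inS E K = G \ K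

/-- `S` is a semikernel of the digraph `(G,E)`. -/
def IsSemikernel {V : Type*} (G : Set V) (E : V → V → Prop) (S : Set V) : Prop :=
  S ⊆ G ∧ outS E S ⊆ inS E S ∧ inS E S ⊆ G \ S

theorem stmt13 {V : Type*} (G : Set V) (E : V → V → Prop)
    (hE : ∀ x y, E x y → x ∈ G ∧ y ∈ G)
    (hker : ∃ K, IsKernel G E K) :
    {S | IsSemikernel G E S ∧ inS E (S ∪ inS E S) ⊆ S ∪ inS E S ∧
         ∀ T, IsSemikernel G E T → inS E (T ∪ inS E T) ⊆ T ∪ inS E T →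
           ¬ (S ∪ inS E S ⊂ T ∪ inS E T)} =
      {K | IsKernel G E K} := by
  obtain ⟨K, hKG, hKin⟩ := hker
  ext S
  simp only [Set.mem_setOf_eq]
  constructor
  · rintro ⟨⟨hSG, hout, hin⟩, hcl, hmax⟩
    have hKsemi : IsSemikernel G E K := by
      refine ⟨hKG, ?_, hKin.le⟩
      rintro y ⟨x, hxK, hxy⟩
      rw [hKin]
      refine ⟨(hE x y hxy).2, fun hyK => ?_⟩
      have hx : x ∈ inS E K := ⟨y, hyK, hxy⟩
      rw [hKin] at hx
      exact hx.2 hxK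
    have hKU : K ∪ inS E K = G := by
      rw [hKin]; exact Set.union_diff_cancel' (le_refl K) hKG
    have hKcl : inS E (K ∪ inS E K) ⊆ K ∪ inS E K := by
      rw [hKU]; rintro y ⟨x, _, hxy⟩; exact (hE y x hxy).1
    have hmx := hmax K hKsemi hKcl
    rw [hKU] at hmx
    have hsub : S ∪ inS E S ⊆ G :=
      Set.union_subset hSG (hin.trans Set.diff_subset)
    have hEq : S ∪ inS E S = G := by
      by_contra h
      exact hmx ⟨hsub, fun hGs => h (le_antisymm hsub hGs)⟩
    refine ⟨hSG, le_antisymm hin fun y hy => ?_⟩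
    have hyU : y ∈ S ∪ inS E S := hEq ▸ hy.1
    cases hyU with
    | inl h => exact absurd h hy.2
    | inr h => exact h
  · rintro ⟨hSG, hSin⟩
    have hU : S ∪ inS E S = G := by
      rw [hSin]; exact Set.union_diff_cancel' (le_refl S) hSG
    refine ⟨⟨hSG, ?_, hSin.le⟩, ?_, ?_⟩
    · rintro y ⟨x, hxS, hxy⟩
      rw [hSin]
      refine ⟨(hE x y hxy).2, fun hyS => ?_⟩
      have hx : x ∈ inS E S := ⟨y, hyS, hxy⟩
      rw [hSin] at hx
      exact hx.2 hxS
    · rw [hU]; rintro y ⟨x, _, hxy⟩; exact (hE y x hxy).1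
    · intro T hT _ hss
      have hTsub : T ∪ inS E T ⊆ G :=
        Set.union_subset hT.1 (hT.2.2.trans Set.diff_subset)
      rw [hU] at hss
      exact hss.2 hTsub
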